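/- For every finite multiset of formulas Γ and every formula A of intuitionistic propositional logic, if the sequent Γ ⇒ A is derivable in Gentzen's 1936 sequential natural deduction calculus (⊢₃₆ Γ ⇒ A), then A is derivable from the open assumptions in (the underlying set of) Γ in Gentzen's 1935 natural deduction calculus (Γ ⊢₃₅ A). -/

import Mathlib

/-- Formulas of intuitionistic propositional logic: atoms, ⊥, ∧, ∨, →.
Negation is defined by ¬A := A → ⊥. -/
inductive PropForm : Type
  | atom : ℕ → PropForm
  | bot  : PropForm
  | conj : PropForm → PropForm → PropForm
  | disj : PropForm → PropForm → PropForm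
  | impl : PropForm → PropForm → PropForm
  deriving DecidableEq

open PropForm

/-- Gentzen's 1935 natural deduction derivability relation `Γ ⊢₃₅ A`,
with `Γ` a finite set of open assumptions. -/
inductive Nd35 : Finset PropForm → PropForm → Prop
  | assumption (A : PropForm) : Nd35 {A} A
  | exFalso {Γ : Finset PropForm} {A : PropForm} :
      Nd35 Γ bot → Nd35 Γ A
  | andIntro {Γ Δ : Finset PropForm} {A B : PropForm} :
      Nd35 Γ A → Nd35 Δ B → Nd35 (Γ ∪ Δ) (conj A B)
  | andElimLeft {Γ : Finset PropForm} {A B : PropForm} :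
      Nd35 Γ (conj A B) → Nd35 Γ A
  | andElimRight {Γ : Finset PropForm} {A B : PropForm} :
      Nd35 Γ (conj A B) → Nd35 Γ B
  | implIntro {Γ : Finset PropForm} {A B : PropForm} :
      Nd35 (insert A Γ) B → Nd35 Γ (impl A B)
  | implElim {Γ Δ : Finset PropForm} {A B : PropForm} :
      Nd35 Γ (impl A B) → Nd35 Δ A → Nd35 (Γ ∪ Δ) B
  | orIntroLeft {Γ : Finset PropForm} {A B : PropForm} :
      Nd35 Γ A → Nd35 Γ (disj A B)
  | orIntroRight {Γ : Finset PropForm} {A B : PropForm} :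
      Nd35 Γ B → Nd35 Γ (disj A B)
  | orElim {Γ Δ Θ : Finset PropForm} {A B C : PropForm} :
      Nd35 Γ (disj A B) → Nd35 (insert A Δ) C → Nd35 (insert B Θ) C →
      Nd35 (Γ ∪ Δ ∪ Θ) C

/-- Gentzen's 1936 sequential natural deduction relation `⊢₃₆ Γ ⇒ A`,
with `Γ` a finite multiset of formulas (exchange is built into the
multiset representation). -/
inductive Nd36 : Multiset PropForm → PropForm → Prop
  | id (A : PropForm) : Nd36 {A} A
  | contraction {Γ : Multiset PropForm} {A B : PropForm} :
      Nd36 (A ::ₘ A ::ₘ Γ) B → Nd36 (A ::ₘ Γ) B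
  | weakening {Γ : Multiset PropForm} {A B : PropForm} :
      Nd36 Γ B → Nd36 (A ::ₘ Γ) B
  | exFalso {Γ : Multiset PropForm} {A : PropForm} :
      Nd36 Γ bot → Nd36 Γ A
  | andIntro {Γ Δ : Multiset PropForm} {A B : PropForm} :
      Nd36 Γ A → Nd36 Δ B → Nd36 (Γ + Δ) (conj A B)
  | andElimLeft {Γ : Multiset PropForm} {A B : PropForm} :
      Nd36 Γ (conj A B) → Nd36 Γ A
  | andElimRight {Γ : Multiset PropForm} {A B : PropForm} :
      Nd36 Γ (conj A B) → Nd36 Γ B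
  | implIntro {Γ : Multiset PropForm} {A B : PropForm} :
      Nd36 (A ::ₘ Γ) B → Nd36 Γ (impl A B)
  | implElim {Γ Δ : Multiset PropForm} {A B : PropForm} :
      Nd36 Γ (impl A B) → Nd36 Δ A → Nd36 (Γ + Δ) B
  | orIntroLeft {Γ : Multiset PropForm} {A B : PropForm} :
      Nd36 Γ A → Nd36 Γ (disj A B)
  | orIntroRight {Γ : Multiset PropForm} {A B : PropForm} :
      Nd36 Γ B → Nd36 Γ (disj A B)
  | orElim {Γ Δ Θ : Multiset PropForm} {A B C : PropForm} :
      Nd36 Γ (disj A B) → Nd36 (A ::ₘ Δ) C → Nd36 (B ::ₘ Θ) C →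
      Nd36 (Γ + Δ + Θ) C

/-- If `⊢₃₆ Γ ⇒ A` then `A` is derivable in 1935 natural deduction from the
underlying set of the multiset `Γ`. -/
lemma Nd35.weaken1 {Γ : Finset PropForm} {A B : PropForm} (h : Nd35 Γ A) :
    Nd35 (insert B Γ) A := by
  have := Nd35.andElimLeft (Nd35.andIntro h (Nd35.assumption B))
  rwa [Finset.insert_eq, Finset.union_comm]

lemma Nd35.weakenUnion {Γ : Finset PropForm} (Δ : Finset PropForm) {A : PropForm}
    (h : Nd35 Γ A) : Nd35 (Γ ∪ Δ) A := by
  induction Δ using Finset.induction_on with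
  | empty => simpa using h
  | insert _ _ _ ih =>
    rename_i a s _
    have : Γ ∪ insert a s = insert a (Γ ∪ s) := by
      ext x; simp [or_left_comm]
    rw [this]
    exact ih.weaken1

lemma Nd35.mono {Γ Δ : Finset PropForm} {A : PropForm} (hsub : Γ ⊆ Δ)
    (h : Nd35 Γ A) : Nd35 Δ A := by
  have := h.weakenUnion Δ
  rwa [Finset.union_eq_right.mpr hsub] at this

theorem nd36_to_nd35 (Γ : Multiset PropForm) (A : PropForm) (h : Nd36 Γ A) :
    Nd35 Γ.toFinset A := by
  induction h with
  | id A => simpa using Nd35.assumption A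
  | contraction _ ih => simpa using ih
  | weakening _ ih => simpa using ih.weaken1
  | exFalso _ ih => exact ih.exFalso
  | andIntro _ _ ih1 ih2 =>
    have := Nd35.andIntro ih1 ih2
    simpa using this
  | andElimLeft _ ih => exact ih.andElimLeft
  | andElimRight _ ih => exact ih.andElimRight
  | implIntro _ ih => exact Nd35.implIntro (by simpa using ih)
  | implElim _ _ ih1 ih2 =>
    have := Nd35.implElim ih1 ih2
    simpa using this
  | orIntroLeft _ ih => exact ih.orIntroLeft
  | orIntroRight _ ih => exact ih.orIntroRight
  | orElim _ _ _ ih1 ih2 ih3 =>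
    have := Nd35.orElim ih1 (by simpa using ih2) (by simpa using ih3)
    simpa using this
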